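/- Let E be a Banach space, T > 0 and 0 < α ≤ 1 < β. Let A and (Aⁿ)_{n∈ℕ} be germs on Δ₂ with ‖A‖_α, ‖δA‖_β < ∞ and ‖Aⁿ‖_α, ‖δAⁿ‖_β < ∞ for every n. Assume there is R > 0 with sup_{n∈ℕ} ‖δAⁿ‖_β ≤ R and that ‖Aⁿ − A‖_α → 0 as n → ∞. Then the sewings converge in α-Hölder norm: sup_{(s,t)∈Δ₂, s≠t} ‖((IA)_t − (IA)_s) − ((IAⁿ)_t − (IAⁿ)_s)‖_E / |t−s|^α → 0 as n → ∞. -/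

import Mathlib

open Filter

/-- A partition of the interval `[s, t]` into finitely many consecutive subintervals. -/
structure SewingPartition (s t : ℝ) where
  n : ℕ
  pts : Fin (n + 1) → ℝ
  mono : Monotone pts
  first : pts 0 = s
  last : pts (Fin.last n) = t

/-- The mesh of a partition. -/
noncomputable def SewingPartition.mesh {s t : ℝ} (P : SewingPartition s t) : ℝ :=
  ⨆ i : Fin P.n, (P.pts i.succ - P.pts i.castSucc)

/-- The Riemann sum of a germ `A` along a partition `P` of `[s, t]`. -/
noncomputable def riemannSum {E : Type*} [NormedAddCommGroup E] {s t : ℝ}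
    (A : ℝ → ℝ → E) (P : SewingPartition s t) : E :=
  ∑ i : Fin P.n, A (P.pts i.castSucc) (P.pts i.succ)

/-- `IA` is the sewing of the germ `A` on `[0,T]`: `IA 0 = 0` and for every
`(s,t) ∈ Δ₂`, the Riemann sums of `A` along any sequence of partitions of `[s,t]` with
mesh tending to `0` converge to `IA t - IA s`. -/
def IsSewing {E : Type*} [NormedAddCommGroup E] (T : ℝ) (A : ℝ → ℝ → E) (IA : ℝ → E) : Prop :=
  IA 0 = 0 ∧
    ∀ s t : ℝ, 0 ≤ s → s ≤ t → t ≤ T →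
      ∀ P : ℕ → SewingPartition s t,
        Tendsto (fun k => (P k).mesh) atTop (nhds 0) →
        Tendsto (fun k => riemannSum A (P k)) atTop (nhds (IA t - IA s))

noncomputable def dyadicP (s t : ℝ) (hst : s ≤ t) (k : ℕ) : SewingPartition s t where
  n := 2 ^ k
  pts := fun i => s + ((i : ℕ) : ℝ) * ((t - s) / 2 ^ k)
  mono := by
    intro i j hij
    have hd : (0:ℝ) ≤ (t - s) / 2 ^ k := div_nonneg (by linarith) (by positivity)
    have hc : ((i:ℕ):ℝ) ≤ ((j:ℕ):ℝ) := by exact_mod_cast hij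
    dsimp only
    nlinarith [mul_le_mul_of_nonneg_right hc hd]
  first := by simp
  last := by
    have h2 : ((2:ℝ)^k) ≠ 0 := by positivity
    simp only [Fin.val_last]
    push_cast
    field_simp
    ring

lemma dyadicP_mesh (s t : ℝ) (hst : s ≤ t) (k : ℕ) :
    (dyadicP s t hst k).mesh = (t - s) / 2 ^ k := by
  have hne : Nonempty (Fin ((dyadicP s t hst k).n)) := by
    simp [dyadicP]
    exact Fin.pos_iff_nonempty.mp (by positivity)
  unfold SewingPartition.mesh
  have h : ∀ i : Fin ((dyadicP s t hst k).n),
      (dyadicP s t hst k).pts i.succ - (dyadicP s t hst k).pts i.castSucc = (t - s) / 2 ^ k := by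
    intro i
    show s + ((i.succ : ℕ) : ℝ) * ((t - s) / 2 ^ k) - (s + ((i.castSucc : ℕ) : ℝ) * ((t - s) / 2 ^ k)) = (t - s) / 2 ^ k
    simp [Fin.val_succ, Fin.coe_castSucc]
    ring
  simp only [h]
  exact ciSup_const

lemma dyadicP_mesh_tendsto (s t : ℝ) (hst : s ≤ t) :
    Tendsto (fun k => (dyadicP s t hst k).mesh) atTop (nhds 0) := by
  simp only [dyadicP_mesh]
  have : (fun k : ℕ => (t - s) / 2 ^ k) = fun k : ℕ => (t - s) * (1/2 : ℝ) ^ k := by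
    funext k; rw [div_eq_mul_inv, ← inv_pow]; norm_num
  rw [this]
  simpa using (tendsto_pow_atTop_nhds_zero_of_lt_one (by norm_num) (by norm_num : (1/2:ℝ) < 1)).const_mul (t - s)

lemma dyadicP_sum {E : Type*} [NormedAddCommGroup E] (B : ℝ → ℝ → E) (s t : ℝ) (hst : s ≤ t) (k : ℕ) :
    riemannSum B (dyadicP s t hst k)
      = ∑ i ∈ Finset.range (2 ^ k),
          B (s + (i : ℝ) * ((t - s) / 2 ^ k)) (s + ((i : ℝ) + 1) * ((t - s) / 2 ^ k)) := by
  unfold riemannSum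
  rw [← Fin.sum_univ_eq_sum_range (fun i => B (s + (i : ℝ) * ((t - s) / 2 ^ k)) (s + ((i : ℝ) + 1) * ((t - s) / 2 ^ k))) (2^k)]
  apply Finset.sum_congr rfl
  intro i _
  show B (s + ((i.castSucc : ℕ) : ℝ) * ((t - s) / 2 ^ k)) (s + ((i.succ : ℕ) : ℝ) * ((t - s) / 2 ^ k)) = _
  simp [Fin.val_succ, Fin.coe_castSucc]

lemma sum_range_two_mul {M : Type*} [AddCommMonoid M] (n : ℕ) (f : ℕ → M) :
    ∑ i ∈ Finset.range (2 * n), f i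
      = ∑ i ∈ Finset.range n, (f (2 * i) + f (2 * i + 1)) := by
  induction n with
  | zero => simp
  | succ n ih =>
      have h : 2 * (n + 1) = (2 * n + 1) + 1 := by ring
      rw [h, Finset.sum_range_succ, Finset.sum_range_succ, ih, Finset.sum_range_succ, add_assoc]

lemma dyadic_step {E : Type*} [NormedAddCommGroup E] (B : ℝ → ℝ → E) (s t : ℝ) (hst : s ≤ t)
    (γ C : ℝ) (hC : 0 ≤ C)
    (hδ : ∀ u v w : ℝ, s ≤ u → u ≤ v → v ≤ w → w ≤ t →
      ‖B u w - B u v - B v w‖ ≤ C * (w - u) ^ γ)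
    (k : ℕ) :
    ‖riemannSum B (dyadicP s t hst k) - riemannSum B (dyadicP s t hst (k+1))‖
      ≤ (2:ℝ)^k * (C * ((t - s)/2^k) ^ γ) := by
  have hd : (0:ℝ) ≤ (t - s) / 2 ^ k := div_nonneg (by linarith) (by positivity)
  rw [dyadicP_sum, dyadicP_sum]
  have h2 : (2:ℕ) ^ (k+1) = 2 * 2 ^ k := by ring
  rw [h2, sum_range_two_mul, ← Finset.sum_sub_distrib]
  refine le_trans (norm_sum_le _ _) ?_
  have hbound : ∀ i ∈ Finset.range (2 ^ k),
      ‖B (s + (i : ℝ) * ((t - s) / 2 ^ k)) (s + ((i : ℝ) + 1) * ((t - s) / 2 ^ k)) -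
        (B (s + ((2*i : ℕ) : ℝ) * ((t - s) / 2 ^ (k+1))) (s + (((2*i : ℕ) : ℝ) + 1) * ((t - s) / 2 ^ (k+1))) +
         B (s + ((2*i+1 : ℕ) : ℝ) * ((t - s) / 2 ^ (k+1))) (s + (((2*i+1 : ℕ) : ℝ) + 1) * ((t - s) / 2 ^ (k+1))))‖
      ≤ C * ((t - s)/2^k) ^ γ := by
    intro i hi
    have e0 : ((2*i+1 : ℕ) : ℝ) = ((2*i : ℕ) : ℝ) + 1 := by push_cast; ring
    rw [e0]
    have hik : (i : ℝ) + 1 ≤ 2 ^ k := by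
      have := Finset.mem_range.mp hi
      exact_mod_cast Nat.succ_le_of_lt this
    have hts : (0:ℝ) ≤ t - s := by linarith
    have hu : s ≤ s + (i : ℝ) * ((t - s) / 2 ^ k) := by
      have : (0:ℝ) ≤ (i : ℝ) * ((t - s) / 2 ^ k) := by positivity
      linarith
    have hd' : (0:ℝ) ≤ (t - s) / 2 ^ (k+1) := div_nonneg hts (by positivity)
    have e1 : ((2*i : ℕ) : ℝ) * ((t - s) / 2 ^ (k+1)) = (i : ℝ) * ((t - s) / 2 ^ k) := by
      push_cast; ring
    have e2 : (((2*i : ℕ) : ℝ) + 1 + 1) * ((t - s) / 2 ^ (k+1)) = ((i : ℝ) + 1) * ((t - s) / 2 ^ k) := by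
      push_cast; ring
    rw [e1, e2]
    have hw : s + ((i : ℝ) + 1) * ((t - s) / 2 ^ k) ≤ t := by
      have h1 : ((i:ℝ)+1) * ((t - s) / 2 ^ k) ≤ (2:ℝ)^k * ((t - s) / 2 ^ k) :=
        mul_le_mul_of_nonneg_right hik hd
      have h2 : (2:ℝ)^k * ((t - s) / 2 ^ k) = t - s := by field_simp
      linarith
    have huv : s + (i : ℝ) * ((t - s) / 2 ^ k) ≤ s + (((2*i : ℕ) : ℝ) + 1) * ((t - s) / 2 ^ (k+1)) := by
      rw [← e1]; nlinarith [hd']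
    have hvw : s + (((2*i : ℕ) : ℝ) + 1) * ((t - s) / 2 ^ (k+1)) ≤ s + ((i : ℝ) + 1) * ((t - s) / 2 ^ k) := by
      rw [← e2]; push_cast; nlinarith [hd']
    have := hδ _ _ _ hu huv hvw hw
    rw [sub_add_eq_sub_sub]
    refine le_trans this ?_
    have : s + ((i : ℝ) + 1) * ((t - s) / 2 ^ k) - (s + (i : ℝ) * ((t - s) / 2 ^ k)) = (t-s)/2^k := by
      ring
    rw [this]
  refine le_trans (Finset.sum_le_sum hbound) ?_
  rw [Finset.sum_const, Finset.card_range, nsmul_eq_mul]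
  push_cast
  exact le_of_eq rfl

lemma step_bound (x γ : ℝ) (hx : 0 ≤ x) (k : ℕ) :
    (2:ℝ)^k * (x/2^k) ^ γ = x ^ γ * ((2:ℝ) ^ ((1:ℝ) - γ)) ^ k := by
  have h2 : (0:ℝ) < 2 := two_pos
  have hk : ((2:ℝ)^k) = (2:ℝ)^((k:ℕ):ℝ) := (Real.rpow_natCast 2 k).symm
  rw [Real.div_rpow hx (by positivity), hk,
    ← Real.rpow_natCast ((2:ℝ) ^ ((1:ℝ) - γ)) k, ← Real.rpow_mul (le_of_lt h2),
    ← Real.rpow_mul (le_of_lt h2)]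
  rw [div_eq_mul_inv, ← Real.rpow_neg (le_of_lt h2)]
  rw [show (2:ℝ)^((k:ℝ)) * (x ^ γ * (2:ℝ)^(-((k:ℝ)*γ))) =
    x ^ γ * ((2:ℝ)^((k:ℝ)) * (2:ℝ)^(-((k:ℝ)*γ))) from by ring, ← Real.rpow_add h2]
  congr 1
  ring

lemma dyadic_telescope {E : Type*} [NormedAddCommGroup E] (B : ℝ → ℝ → E) (s t : ℝ) (hst : s ≤ t)
    (γ C : ℝ) (hC : 0 ≤ C)
    (hδ : ∀ u v w : ℝ, s ≤ u → u ≤ v → v ≤ w → w ≤ t →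
      ‖B u w - B u v - B v w‖ ≤ C * (w - u) ^ γ)
    (k : ℕ) :
    ‖riemannSum B (dyadicP s t hst k) - riemannSum B (dyadicP s t hst 0)‖
      ≤ ∑ j ∈ Finset.range k, C * (t - s) ^ γ * ((2:ℝ) ^ ((1:ℝ) - γ)) ^ j := by
  induction k with
  | zero => simp
  | succ k ih =>
      have step := dyadic_step B s t hst γ C hC hδ k
      rw [← mul_assoc, mul_comm ((2:ℝ)^k) C, mul_assoc, step_bound (t - s) γ (by linarith) k,
        ← mul_assoc] at step
      calc ‖riemannSum B (dyadicP s t hst (k+1)) - riemannSum B (dyadicP s t hst 0)‖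
          ≤ ‖riemannSum B (dyadicP s t hst (k+1)) - riemannSum B (dyadicP s t hst k)‖
            + ‖riemannSum B (dyadicP s t hst k) - riemannSum B (dyadicP s t hst 0)‖ :=
            norm_sub_le_norm_sub_add_norm_sub _ _ _
        _ ≤ C * (t - s) ^ γ * ((2:ℝ) ^ ((1:ℝ) - γ)) ^ k
            + ∑ j ∈ Finset.range k, C * (t - s) ^ γ * ((2:ℝ) ^ ((1:ℝ) - γ)) ^ j := by
            refine add_le_add ?_ ih
            rw [norm_sub_rev]; exact step
        _ = ∑ j ∈ Finset.range (k+1), C * (t - s) ^ γ * ((2:ℝ) ^ ((1:ℝ) - γ)) ^ j := by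
            rw [Finset.sum_range_succ]; ring

lemma sewing_est {E : Type*} [NormedAddCommGroup E] (B : ℝ → ℝ → E) (s t : ℝ) (hst : s ≤ t)
    (γ C : ℝ) (hγ : 1 < γ) (hC : 0 ≤ C)
    (hδ : ∀ u v w : ℝ, s ≤ u → u ≤ v → v ≤ w → w ≤ t →
      ‖B u w - B u v - B v w‖ ≤ C * (w - u) ^ γ)
    (L : E)
    (hL : Tendsto (fun k => riemannSum B (dyadicP s t hst k)) atTop (nhds L)) :
    ‖L - B s t‖ ≤ C * (t - s) ^ γ * (1 - (2:ℝ)^((1:ℝ)-γ))⁻¹ := by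
  have hS0 : riemannSum B (dyadicP s t hst 0) = B s t := by
    rw [dyadicP_sum]
    norm_num
  have hr0 : 0 ≤ (2:ℝ)^((1:ℝ)-γ) := le_of_lt (Real.rpow_pos_of_pos two_pos _)
  have hr1 : (2:ℝ)^((1:ℝ)-γ) < 1 :=
    Real.rpow_lt_one_of_one_lt_of_neg one_lt_two (by linarith)
  have hc0 : 0 ≤ C * (t - s) ^ γ := mul_nonneg hC (Real.rpow_nonneg (by linarith) _)
  have key : ∀ k, ‖riemannSum B (dyadicP s t hst k) - B s t‖
      ≤ C * (t - s) ^ γ * (1 - (2:ℝ)^((1:ℝ)-γ))⁻¹ := by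
    intro k
    have h1 := dyadic_telescope B s t hst γ C hC hδ k
    rw [hS0] at h1
    refine h1.trans ?_
    rw [← Finset.mul_sum]
    refine mul_le_mul_of_nonneg_left ?_ hc0
    calc ∑ j ∈ Finset.range k, ((2:ℝ) ^ ((1:ℝ) - γ)) ^ j
        ≤ ∑' j : ℕ, ((2:ℝ) ^ ((1:ℝ) - γ)) ^ j :=
          Summable.sum_le_tsum _ (fun j _ => pow_nonneg hr0 j) (summable_geometric_of_lt_one hr0 hr1)
      _ = (1 - (2:ℝ)^((1:ℝ)-γ))⁻¹ := tsum_geometric_of_lt_one hr0 hr1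
  exact le_of_tendsto ((hL.sub_const (B s t)).norm) (Eventually.of_forall key)

set_option maxHeartbeats 1000000 in
/-- **Convergence of sewings.** Let `E` be Banach, `T > 0`, `0 < α ≤ 1 < β`. Let `A` and
`(Aⁿ)` be germs with finite `‖·‖_α` and `‖δ(·)‖_β` norms, `sup_n ‖δAⁿ‖_β ≤ R` and
`‖Aⁿ - A‖_α → 0`. Then the sewings converge in `α`-Hölder norm:
`sup_{(s,t)∈Δ₂} ‖(IA t - IA s) - (IAⁿ t - IAⁿ s)‖/(t-s)^α → 0`. -/
theorem sewing_convergence {E : Type*} [NormedAddCommGroup E] [NormedSpace ℝ E]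
    [CompleteSpace E]
    (T : ℝ) (hT : 0 < T) (α β : ℝ) (hα : 0 < α) (hα1 : α ≤ 1) (hβ : 1 < β)
    (A : ℝ → ℝ → E) (An : ℕ → ℝ → ℝ → E)
    (hA0 : ∀ t ∈ Set.Icc (0 : ℝ) T, A t t = 0)
    (hAn0 : ∀ n : ℕ, ∀ t ∈ Set.Icc (0 : ℝ) T, An n t t = 0)
    -- `‖A‖_α < ∞` and `‖δA‖_β < ∞`
    (hAα : ∃ C : ℝ, ∀ s t : ℝ, 0 ≤ s → s ≤ t → t ≤ T → ‖A s t‖ ≤ C * (t - s) ^ α)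
    (hAβ : ∃ C : ℝ, ∀ s u t : ℝ, 0 ≤ s → s ≤ u → u ≤ t → t ≤ T →
      ‖A s t - A s u - A u t‖ ≤ C * (t - s) ^ β)
    -- `‖Aⁿ‖_α < ∞` for every `n`
    (hAnα : ∀ n : ℕ, ∃ C : ℝ, ∀ s t : ℝ, 0 ≤ s → s ≤ t → t ≤ T →
      ‖An n s t‖ ≤ C * (t - s) ^ α)
    -- `sup_n ‖δAⁿ‖_β ≤ R` (in particular `‖δAⁿ‖_β < ∞` for every `n`)
    (R : ℝ) (hR : 0 < R)
    (hAnβ : ∀ n : ℕ, ∀ s u t : ℝ, 0 ≤ s → s ≤ u → u ≤ t → t ≤ T →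
      ‖An n s t - An n s u - An n u t‖ ≤ R * (t - s) ^ β)
    -- `‖Aⁿ - A‖_α → 0`
    (hconv : ∀ ε : ℝ, 0 < ε → ∃ N : ℕ, ∀ n ≥ N, ∀ s t : ℝ, 0 ≤ s → s ≤ t → t ≤ T →
      ‖An n s t - A s t‖ ≤ ε * (t - s) ^ α)
    (IA : ℝ → E) (IAn : ℕ → ℝ → E)
    (hIA : IsSewing T A IA) (hIAn : ∀ n : ℕ, IsSewing T (An n) (IAn n)) :
    ∀ ε : ℝ, 0 < ε → ∃ N : ℕ, ∀ n ≥ N, ∀ s t : ℝ, 0 ≤ s → s ≤ t → t ≤ T →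
      ‖(IA t - IA s) - (IAn n t - IAn n s)‖ ≤ ε * (t - s) ^ α := by
  intro ε₀ hε₀
  obtain ⟨CA, hCA⟩ := hAβ
  have hM0 : 0 < max CA 0 + R := by
    have := le_max_right CA 0; linarith
  set M : ℝ := max CA 0 + R with hM
  set γ : ℝ := (β + 1) / 2 with hγdef
  have hγ1 : 1 < γ := by rw [hγdef]; linarith
  have hγβ : γ < β := by rw [hγdef]; linarith
  have hβα : 0 < β - α := by linarith
  set θ : ℝ := (β - γ) / (β - α) with hθdef
  have hθ0 : 0 < θ := div_pos (by linarith) hβα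
  have hθ1 : θ < 1 := by
    rw [hθdef, div_lt_one hβα]; linarith
  have hγeq : α * θ + β * (1 - θ) = γ := by
    rw [hθdef]; field_simp; ring
  set Kγ : ℝ := (1 - (2:ℝ) ^ ((1:ℝ) - γ))⁻¹ with hKdef
  have hr1 : (2:ℝ) ^ ((1:ℝ) - γ) < 1 :=
    Real.rpow_lt_one_of_one_lt_of_neg one_lt_two (by linarith)
  have hK0 : 0 < Kγ := inv_pos.2 (by linarith)
  set c' : ℝ := max (Kγ * M ^ ((1:ℝ) - θ) * T ^ (γ - α)) 1 with hc'def
  have hc'1 : (1:ℝ) ≤ c' := le_max_right _ _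
  have hc'0 : 0 < c' := by linarith
  set ε : ℝ := min (ε₀ / 2) ((ε₀ / (2 * c')) ^ θ⁻¹ / 3) with hεdef
  have hq0 : 0 < ε₀ / (2 * c') := by positivity
  have hε : 0 < ε := lt_min (by positivity) (by positivity)
  obtain ⟨N, hN⟩ := hconv ε hε
  refine ⟨N, fun n hn s t hs hst htT => ?_⟩
  rcases eq_or_lt_of_le hst with heq | hlt
  · subst heq
    simp [Real.zero_rpow hα.ne']
  have hts0 : (0:ℝ) < t - s := by linarith
  have hCδ0 : (0:ℝ) ≤ (3 * ε) ^ θ * M ^ ((1:ℝ) - θ) := by positivity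
  -- δ-bound for the difference germ
  have hδB : ∀ u v w : ℝ, s ≤ u → u ≤ v → v ≤ w → w ≤ t →
      ‖(A u w - An n u w) - (A u v - An n u v) - (A v w - An n v w)‖
        ≤ ((3 * ε) ^ θ * M ^ ((1:ℝ) - θ)) * (w - u) ^ γ := by
    intro u v w hsu huv hvw hwt
    have h0u : 0 ≤ u := by linarith
    have hwT : w ≤ T := by linarith
    have hx0 : (0:ℝ) ≤ w - u := by linarith
    have hbd : ∀ a b : ℝ, u ≤ a → a ≤ b → b ≤ w → ‖A a b - An n a b‖ ≤ ε * (w - u) ^ α := by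
      intro a b hua hab hbw
      rw [norm_sub_rev]
      refine (hN n hn a b (by linarith) hab (by linarith)).trans ?_
      have h5 : (b - a) ^ α ≤ (w - u) ^ α :=
        Real.rpow_le_rpow (by linarith) (by linarith) hα.le
      exact mul_le_mul_of_nonneg_left h5 hε.le
    have h1 : ‖(A u w - An n u w) - (A u v - An n u v) - (A v w - An n v w)‖
        ≤ 3 * ε * ((w - u) ^ α) := by
      calc ‖(A u w - An n u w) - (A u v - An n u v) - (A v w - An n v w)‖
          ≤ ‖(A u w - An n u w) - (A u v - An n u v)‖ + ‖A v w - An n v w‖ := norm_sub_le _ _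
        _ ≤ ‖A u w - An n u w‖ + ‖A u v - An n u v‖ + ‖A v w - An n v w‖ := by
            have := norm_sub_le (A u w - An n u w) (A u v - An n u v); linarith
        _ ≤ ε * (w - u) ^ α + ε * (w - u) ^ α + ε * (w - u) ^ α := by
            have b1 := hbd u w le_rfl (by linarith) le_rfl
            have b2 := hbd u v le_rfl huv hvw
            have b3 := hbd v w huv hvw le_rfl
            linarith
        _ = 3 * ε * ((w - u) ^ α) := by ring
    have h2 : ‖(A u w - An n u w) - (A u v - An n u v) - (A v w - An n v w)‖
        ≤ M * ((w - u) ^ β) := by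
      have e : (A u w - An n u w) - (A u v - An n u v) - (A v w - An n v w)
          = (A u w - A u v - A v w) - (An n u w - An n u v - An n v w) := by abel
      rw [e]
      have b1 := hCA u v w h0u huv hvw hwT
      have b2 := hAnβ n u v w h0u huv hvw hwT
      have h3 : CA ≤ max CA 0 := le_max_left _ _
      have h4 : (0:ℝ) ≤ (w - u) ^ β := Real.rpow_nonneg hx0 _
      calc ‖(A u w - A u v - A v w) - (An n u w - An n u v - An n v w)‖
          ≤ ‖A u w - A u v - A v w‖ + ‖An n u w - An n u v - An n v w‖ := norm_sub_le _ _
        _ ≤ CA * (w - u) ^ β + R * (w - u) ^ β := by linarith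
        _ ≤ M * ((w - u) ^ β) := by rw [hM]; nlinarith
    set X : ℝ := ‖(A u w - An n u w) - (A u v - An n u v) - (A v w - An n v w)‖ with hXdef
    have hX0 : 0 ≤ X := norm_nonneg _
    have hXe : X ^ θ * X ^ (1 - θ) = X := by
      rw [← Real.rpow_add' hX0 (by norm_num), show θ + (1 - θ) = (1:ℝ) by ring, Real.rpow_one]
    have h3ε0 : (0:ℝ) ≤ 3 * ε * ((w - u) ^ α) := by positivity
    have hstep : X ≤ (3 * ε * ((w - u) ^ α)) ^ θ * (M * ((w - u) ^ β)) ^ (1 - θ) := by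
      rw [← hXe]
      exact mul_le_mul (Real.rpow_le_rpow hX0 h1 hθ0.le)
        (Real.rpow_le_rpow hX0 h2 (by linarith))
        (Real.rpow_nonneg hX0 _) (Real.rpow_nonneg h3ε0 _)
    refine hstep.trans (le_of_eq ?_)
    have hxx : (w - u) ^ (α * θ) * (w - u) ^ (β * (1 - θ)) = (w - u) ^ γ := by
      rw [← Real.rpow_add' hx0 (by rw [hγeq]; exact ne_of_gt (by linarith)), hγeq]
    rw [Real.mul_rpow (by positivity) (Real.rpow_nonneg hx0 _),
      Real.mul_rpow hM0.le (Real.rpow_nonneg hx0 _),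
      ← Real.rpow_mul hx0 α θ, ← Real.rpow_mul hx0 β (1 - θ), ← hxx]
    ring
  -- Riemann sums of the difference converge to the difference of sewings
  have hsum : ∀ k, riemannSum (fun u v => A u v - An n u v) (dyadicP s t hst k)
      = riemannSum A (dyadicP s t hst k) - riemannSum (An n) (dyadicP s t hst k) := by
    intro k
    unfold riemannSum
    rw [← Finset.sum_sub_distrib]
  have hL : Tendsto (fun k => riemannSum (fun u v => A u v - An n u v) (dyadicP s t hst k))
      atTop (nhds ((IA t - IA s) - (IAn n t - IAn n s))) := by
    have t1 := hIA.2 s t hs hst htT (dyadicP s t hst) (dyadicP_mesh_tendsto s t hst)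
    have t2 := (hIAn n).2 s t hs hst htT (dyadicP s t hst) (dyadicP_mesh_tendsto s t hst)
    have := t1.sub t2
    simpa only [hsum] using this
  have est := sewing_est (fun u v => A u v - An n u v) s t hst γ ((3 * ε) ^ θ * M ^ ((1:ℝ) - θ))
    hγ1 hCδ0 hδB _ hL
  -- assemble
  have hBst : ‖A s t - An n s t‖ ≤ ε * (t - s) ^ α := by
    rw [norm_sub_rev]; exact hN n hn s t hs hst htT
  have hxα : (0:ℝ) < (t - s) ^ α := Real.rpow_pos_of_pos hts0 _
  have hxγα : (t - s) ^ γ ≤ T ^ (γ - α) * (t - s) ^ α := by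
    have e : (t - s) ^ γ = (t - s) ^ (γ - α) * (t - s) ^ α := by
      rw [← Real.rpow_add hts0]; congr 1; ring
    rw [e]
    have : (t - s) ^ (γ - α) ≤ T ^ (γ - α) :=
      Real.rpow_le_rpow (by linarith) (by linarith) (by linarith)
    exact mul_le_mul_of_nonneg_right this hxα.le
  have h3εθ : (3 * ε) ^ θ ≤ ε₀ / (2 * c') := by
    have h3ε : 3 * ε ≤ (ε₀ / (2 * c')) ^ θ⁻¹ := by
      have := min_le_right (ε₀ / 2) ((ε₀ / (2 * c')) ^ θ⁻¹ / 3)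
      rw [← hεdef] at this
      linarith
    calc (3 * ε) ^ θ ≤ ((ε₀ / (2 * c')) ^ θ⁻¹) ^ θ :=
          Real.rpow_le_rpow (by positivity) h3ε hθ0.le
      _ = ε₀ / (2 * c') := by
          rw [← Real.rpow_mul hq0.le, inv_mul_cancel₀ hθ0.ne', Real.rpow_one]
  have hterm2 : ((3 * ε) ^ θ * M ^ ((1:ℝ) - θ)) * (t - s) ^ γ * Kγ
      ≤ (ε₀ / 2) * (t - s) ^ α := by
    have hMθ : (0:ℝ) ≤ M ^ ((1:ℝ) - θ) := Real.rpow_nonneg hM0.le _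
    have hTγ : (0:ℝ) ≤ T ^ (γ - α) := Real.rpow_nonneg hT.le _
    have step1 : ((3 * ε) ^ θ * M ^ ((1:ℝ) - θ)) * (t - s) ^ γ * Kγ
        ≤ ((3 * ε) ^ θ * M ^ ((1:ℝ) - θ)) * (T ^ (γ - α) * (t - s) ^ α) * Kγ := by
      have := mul_le_mul_of_nonneg_left hxγα
        (mul_nonneg (Real.rpow_nonneg (by positivity : (0:ℝ) ≤ 3 * ε) θ) hMθ)
      exact mul_le_mul_of_nonneg_right this hK0.le
    have step2 : ((3 * ε) ^ θ * M ^ ((1:ℝ) - θ)) * (T ^ (γ - α) * (t - s) ^ α) * Kγ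
        = (3 * ε) ^ θ * (Kγ * M ^ ((1:ℝ) - θ) * T ^ (γ - α)) * (t - s) ^ α := by ring
    have step3 : (3 * ε) ^ θ * (Kγ * M ^ ((1:ℝ) - θ) * T ^ (γ - α)) * (t - s) ^ α
        ≤ (ε₀ / (2 * c')) * c' * (t - s) ^ α := by
      have hle : Kγ * M ^ ((1:ℝ) - θ) * T ^ (γ - α) ≤ c' := le_max_left _ _
      have h30 : (0:ℝ) ≤ (3 * ε) ^ θ := Real.rpow_nonneg (by positivity) _
      have := mul_le_mul h3εθ hle
        (mul_nonneg (mul_nonneg hK0.le hMθ) hTγ) hq0.le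
      exact mul_le_mul_of_nonneg_right this hxα.le
    have step4 : (ε₀ / (2 * c')) * c' * (t - s) ^ α = (ε₀ / 2) * (t - s) ^ α := by
      field_simp
    linarith [step1, step2 ▸ step3]
  have hεhalf : ε ≤ ε₀ / 2 := min_le_left _ _
  calc ‖(IA t - IA s) - (IAn n t - IAn n s)‖
      ≤ ‖(IA t - IA s) - (IAn n t - IAn n s) - (A s t - An n s t)‖ + ‖A s t - An n s t‖ := by
        have h := norm_add_le
          ((IA t - IA s) - (IAn n t - IAn n s) - (A s t - An n s t)) (A s t - An n s t)
        simpa using h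
    _ ≤ ((3 * ε) ^ θ * M ^ ((1:ℝ) - θ)) * (t - s) ^ γ * Kγ + ε * (t - s) ^ α :=
        add_le_add est hBst
    _ ≤ (ε₀ / 2) * (t - s) ^ α + (ε₀ / 2) * (t - s) ^ α := by
        have := mul_le_mul_of_nonneg_right hεhalf hxα.le
        linarith
    _ = ε₀ * (t - s) ^ α := by ring
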